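/- If the reverses of two words w and w' are Knuth equivalent, then S ⋆ w = S ⋆ w' for every finite S ⊆ ℤ_{>0}, where ⋆ is the column-bumping action on sets. -/

import Mathlib

/-- The `⋆` column-bumping action of a single letter `m` on a finite set `S`:
if no element of `S` is `≥ m`, then `S ⋆ m = S ∪ {m}`; otherwise
`S ⋆ m = (S \ {m'}) ∪ {m}` where `m'` is the smallest element of `S` with `m' ≥ m`. -/
def starLetter (S : Finset ℕ) (m : ℕ) : Finset ℕ :=
  if h : (S.filter (fun s => m ≤ s)).Nonempty then
    insert m (S.erase ((S.filter (fun s => m ≤ s)).min' h))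
  else insert m S

/-- The `⋆` action of a word, letter by letter from the left. -/
def star (S : Finset ℕ) (w : List ℕ) : Finset ℕ :=
  w.foldl starLetter S

lemma starLetter_bump (S : Finset ℕ) (m q : ℕ) (hq : q ∈ S) (hmq : m ≤ q)
    (hmin : ∀ x ∈ S, m ≤ x → q ≤ x) : starLetter S m = insert m (S.erase q) := by
  have hmem : q ∈ S.filter (fun s => m ≤ s) := Finset.mem_filter.2 ⟨hq, hmq⟩
  have hne : (S.filter (fun s => m ≤ s)).Nonempty := ⟨q, hmem⟩
  rw [starLetter, dif_pos hne]
  congr 2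
  refine le_antisymm (Finset.min'_le _ q hmem) (Finset.le_min' _ _ _ ?_)
  intro y hy
  rw [Finset.mem_filter] at hy
  exact hmin y hy.1 hy.2

lemma starLetter_insert (S : Finset ℕ) (m : ℕ) (h : ∀ x ∈ S, x < m) :
    starLetter S m = insert m S := by
  rw [starLetter, dif_neg]
  rintro ⟨x, hx⟩
  rw [Finset.mem_filter] at hx
  exact absurd (h x hx.1) (not_lt.2 hx.2)

lemma mem_starLetter_self (S : Finset ℕ) (m : ℕ) : m ∈ starLetter S m := by
  rw [starLetter]; split <;> exact Finset.mem_insert_self _ _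

lemma mem_starLetter_of_lt {S : Finset ℕ} {x m : ℕ} (hx : x ∈ S) (h : x < m) :
    x ∈ starLetter S m := by
  rw [starLetter]
  split
  · next hne =>
    refine Finset.mem_insert_of_mem (Finset.mem_erase.2 ⟨?_, hx⟩)
    intro heq
    have : m ≤ (S.filter (fun s => m ≤ s)).min' hne := by
      have := Finset.min'_mem (S.filter (fun s => m ≤ s)) hne
      exact (Finset.mem_filter.1 this).2
    omega
  · exact Finset.mem_insert_of_mem hx

lemma starLetter_mem (S : Finset ℕ) {a : ℕ} (ha : a ∈ S) : starLetter S a = S := by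
  rw [starLetter_bump S a a ha le_rfl (fun x _ h => h), Finset.insert_erase ha]

lemma exists_min_ge (S : Finset ℕ) (m : ℕ) (h : ∃ r ∈ S, m ≤ r) :
    ∃ r ∈ S, m ≤ r ∧ (∀ x ∈ S, m ≤ x → r ≤ x) ∧ starLetter S m = insert m (S.erase r) := by
  obtain ⟨e, he, hme⟩ := h
  have hne : (S.filter (fun s => m ≤ s)).Nonempty := ⟨e, Finset.mem_filter.2 ⟨he, hme⟩⟩
  set r := (S.filter (fun s => m ≤ s)).min' hne with hr
  have hrmem := Finset.min'_mem _ hne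
  rw [Finset.mem_filter] at hrmem
  have hmin : ∀ x ∈ S, m ≤ x → r ≤ x := fun x hx hmx =>
    Finset.min'_le _ x (Finset.mem_filter.2 ⟨hx, hmx⟩)
  exact ⟨r, hrmem.1, hrmem.2, hmin, starLetter_bump S m r hrmem.1 hrmem.2 hmin⟩

lemma starLetter_comm (S : Finset ℕ) {a c : ℕ} (hac : a < c) (e : ℕ) (he : e ∈ S)
    (hae : a ≤ e) (hec : e < c) :
    starLetter (starLetter S c) a = starLetter (starLetter S a) c := by
  obtain ⟨p, hpS, hap, hpmin, hSa⟩ := exists_min_ge S a ⟨e, he, hae⟩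
  have hpc : p < c := lt_of_le_of_lt (hpmin e he hae) hec
  by_cases hr : ∃ r ∈ S, c ≤ r
  · obtain ⟨r, hrS, hcr, hrmin, hSc⟩ := exists_min_ge S c hr
    have h1 : starLetter (starLetter S c) a = insert a ((insert c (S.erase r)).erase p) := by
      rw [hSc]
      refine starLetter_bump _ a p ?_ hap ?_
      · exact Finset.mem_insert_of_mem (Finset.mem_erase.2 ⟨by omega, hpS⟩)
      · intro x hx hax
        rcases Finset.mem_insert.1 hx with h | h
        · omega
        · exact hpmin x (Finset.mem_erase.1 h).2 hax
    have h2 : starLetter (starLetter S a) c = insert c ((insert a (S.erase p)).erase r) := by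
      rw [hSa]
      refine starLetter_bump _ c r ?_ hcr ?_
      · exact Finset.mem_insert_of_mem (Finset.mem_erase.2 ⟨by omega, hrS⟩)
      · intro x hx hcx
        rcases Finset.mem_insert.1 hx with h | h
        · omega
        · exact hrmin x (Finset.mem_erase.1 h).2 hcx
    rw [h1, h2]
    ext x
    simp only [Finset.mem_insert, Finset.mem_erase]
    by_cases hx : x ∈ S <;> simp [hx] <;> omega
  · push_neg at hr
    have hSc : starLetter S c = insert c S := starLetter_insert S c hr
    have h1 : starLetter (starLetter S c) a = insert a ((insert c S).erase p) := by
      rw [hSc]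
      refine starLetter_bump _ a p (Finset.mem_insert_of_mem hpS) hap ?_
      intro x hx hax
      rcases Finset.mem_insert.1 hx with h | h
      · omega
      · exact hpmin x h hax
    have h2 : starLetter (starLetter S a) c = insert c (insert a (S.erase p)) := by
      rw [hSa]
      refine starLetter_insert _ c ?_
      intro x hx
      rcases Finset.mem_insert.1 hx with h | h
      · omega
      · exact hr x (Finset.mem_erase.1 h).2
    rw [h1, h2]
    ext x
    simp only [Finset.mem_insert, Finset.mem_erase]
    by_cases hx : x ∈ S <;> simp [hx] <;> omega

lemma t_wr (S : Finset ℕ) {a b c : ℕ} (h1 : a < b) (h2 : b < c) :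
    starLetter (starLetter (starLetter S b) c) a
      = starLetter (starLetter (starLetter S b) a) c :=
  starLetter_comm (starLetter S b) (h1.trans h2) b (mem_starLetter_self S b) h1.le h2

lemma t_eqr (S : Finset ℕ) {a b : ℕ} (h : a < b) :
    starLetter (starLetter (starLetter S a) a) b
      = starLetter (starLetter (starLetter S a) b) a := by
  rw [starLetter_mem _ (mem_starLetter_self S a),
    starLetter_mem _ (mem_starLetter_of_lt (mem_starLetter_self S a) h)]

lemma t_eql (S : Finset ℕ) {a b : ℕ} (h : a < b) :
    starLetter (starLetter (starLetter S a) b) b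
      = starLetter (starLetter (starLetter S b) a) b := by
  rw [starLetter_mem _ (mem_starLetter_self (starLetter S a) b)]
  by_cases he : ∃ e ∈ S, a ≤ e ∧ e < b
  · obtain ⟨e, he, hae, heb⟩ := he
    rw [starLetter_comm S h e he hae heb,
      starLetter_mem _ (mem_starLetter_self (starLetter S a) b)]
  · push_neg at he
    -- show (S⋆b)⋆a = S⋆a
    suffices hs : starLetter (starLetter S b) a = starLetter S a by rw [hs]
    by_cases hp : ∃ p ∈ S, b ≤ p
    · obtain ⟨p, hpS, hbp, hpmin, hSb⟩ := exists_min_ge S b hp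
      have hSa : starLetter S a = insert a (S.erase p) := by
        refine starLetter_bump S a p hpS (by omega) ?_
        intro x hx hax
        exact hpmin x hx (he x hx hax)
      have h1 : starLetter (starLetter S b) a
          = insert a ((insert b (S.erase p)).erase b) := by
        rw [hSb]
        refine starLetter_bump _ a b (Finset.mem_insert_self _ _) h.le ?_
        intro x hx hax
        rcases Finset.mem_insert.1 hx with hxb | hx'
        · omega
        · exact he x (Finset.mem_erase.1 hx').2 hax
      rw [h1, hSa]
      ext x
      simp only [Finset.mem_insert, Finset.mem_erase]
      by_cases hx : x ∈ S
      · have h3 : b ≤ x → p ≤ x := hpmin x hx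
        simp [hx] <;> omega
      · simp [hx] <;> omega
    · push_neg at hp
      have hlt : ∀ x ∈ S, x < a := fun x hx => by
        have := hp x hx; have := he x hx; omega
      have hSb : starLetter S b = insert b S := starLetter_insert S b (fun x hx => (hlt x hx).trans h)
      have hSa : starLetter S a = insert a S := starLetter_insert S a hlt
      have h1 : starLetter (starLetter S b) a = insert a ((insert b S).erase b) := by
        rw [hSb]
        refine starLetter_bump _ a b (Finset.mem_insert_self _ _) h.le ?_
        intro x hx hax
        rcases Finset.mem_insert.1 hx with hxb | hx'
        · omega
        · exact absurd (hlt x hx') (by omega)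
      rw [h1, hSa]
      ext x
      simp only [Finset.mem_insert, Finset.mem_erase]
      by_cases hx : x ∈ S
      · have := hlt x hx; simp [hx] <;> omega
      · simp [hx] <;> omega

lemma t_wl (S : Finset ℕ) {a b c : ℕ} (h1 : a < b) (h2 : b < c) :
    starLetter (starLetter (starLetter S c) a) b
      = starLetter (starLetter (starLetter S a) c) b := by
  by_cases he : ∃ e ∈ S, a ≤ e ∧ e < c
  · obtain ⟨e, heS, hae, hec⟩ := he
    rw [starLetter_comm S (h1.trans h2) e heS hae hec]
  · push_neg at he
    -- he : ∀ x ∈ S, a ≤ x → c ≤ x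
    by_cases hr : ∃ r ∈ S, c ≤ r
    · obtain ⟨r, hrS, hcr, hrmin, hSc⟩ := exists_min_ge S c hr
      have hSa : starLetter S a = insert a (S.erase r) := by
        refine starLetter_bump S a r hrS (by omega) ?_
        intro x hx hax
        exact hrmin x hx (he x hx hax)
      have hca : starLetter (starLetter S c) a
          = insert a ((insert c (S.erase r)).erase c) := by
        rw [hSc]
        refine starLetter_bump _ a c (Finset.mem_insert_self _ _) (by omega) ?_
        intro x hx hax
        rcases Finset.mem_insert.1 hx with hxc | hx'
        · omega
        · exact he x (Finset.mem_erase.1 hx').2 hax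
      by_cases hr2 : ∃ r2 ∈ S.erase r, c ≤ r2
      · obtain ⟨r2, hr2S', hcr2, hr2min, _⟩ := exists_min_ge (S.erase r) c hr2
        obtain ⟨hr2r, hr2S⟩ := Finset.mem_erase.1 hr2S'
        have hr2c : r2 ≠ c := by
          intro hh
          have := hrmin r2 hr2S (by omega)
          omega
        have hLHS : starLetter (starLetter (starLetter S c) a) b
            = insert b ((insert a ((insert c (S.erase r)).erase c)).erase r2) := by
          rw [hca]
          refine starLetter_bump _ b r2 ?_ (by omega) ?_
          · refine Finset.mem_insert_of_mem (Finset.mem_erase.2 ⟨hr2c, ?_⟩)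
            exact Finset.mem_insert_of_mem (Finset.mem_erase.2 ⟨hr2r, hr2S⟩)
          · intro x hx hbx
            rcases Finset.mem_insert.1 hx with hxa | hx'
            · omega
            · obtain ⟨hxc, hx''⟩ := Finset.mem_erase.1 hx'
              rcases Finset.mem_insert.1 hx'' with h' | h'
              · omega
              · exact hr2min x h' (he x (Finset.mem_erase.1 h').2 (by omega))
        have hac : starLetter (starLetter S a) c
            = insert c ((insert a (S.erase r)).erase r2) := by
          rw [hSa]
          refine starLetter_bump _ c r2 ?_ hcr2 ?_
          · exact Finset.mem_insert_of_mem (Finset.mem_erase.2 ⟨by omega, hr2S⟩)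
          · intro x hx hcx
            rcases Finset.mem_insert.1 hx with hxa | hx'
            · omega
            · exact hr2min x (Finset.mem_erase.2 (Finset.mem_erase.1 hx')) hcx
        have hRHS : starLetter (starLetter (starLetter S a) c) b
            = insert b ((insert c ((insert a (S.erase r)).erase r2)).erase c) := by
          rw [hac]
          refine starLetter_bump _ b c (Finset.mem_insert_self _ _) (by omega) ?_
          intro x hx hbx
          rcases Finset.mem_insert.1 hx with hxc | hx'
          · omega
          · obtain ⟨hxr2, hx''⟩ := Finset.mem_erase.1 hx'
            rcases Finset.mem_insert.1 hx'' with h' | h'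
            · omega
            · exact he x (Finset.mem_erase.1 h').2 (by omega)
        rw [hLHS, hRHS]
        ext x
        simp only [Finset.mem_insert, Finset.mem_erase]
        by_cases hx : x ∈ S
        · have f1 : a ≤ x → c ≤ x := he x hx
          have f2 : c ≤ x → r ≤ x := hrmin x hx
          have f3 : x ≠ r → c ≤ x → r2 ≤ x := fun hh hh' =>
            hr2min x (Finset.mem_erase.2 ⟨hh, hx⟩) hh'
          simp [hx] <;> omega
        · simp [hx] <;> omega
      · push_neg at hr2
        have hsmall : ∀ x ∈ S, x ≠ r → x < a := by
          intro x hx hxr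
          have := hr2 x (Finset.mem_erase.2 ⟨hxr, hx⟩)
          have := he x hx
          omega
        have hLHS : starLetter (starLetter (starLetter S c) a) b
            = insert b (insert a ((insert c (S.erase r)).erase c)) := by
          rw [hca]
          refine starLetter_insert _ b ?_
          intro x hx
          rcases Finset.mem_insert.1 hx with hxa | hx'
          · omega
          · obtain ⟨hxc, hx''⟩ := Finset.mem_erase.1 hx'
            rcases Finset.mem_insert.1 hx'' with h' | h'
            · omega
            · obtain ⟨hxr, hxS⟩ := Finset.mem_erase.1 h'
              have := hsmall x hxS hxr; omega
        have hac : starLetter (starLetter S a) c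
            = insert c (insert a (S.erase r)) := by
          rw [hSa]
          refine starLetter_insert _ c ?_
          intro x hx
          rcases Finset.mem_insert.1 hx with hxa | hx'
          · omega
          · obtain ⟨hxr, hxS⟩ := Finset.mem_erase.1 hx'
            have := hsmall x hxS hxr; omega
        have hRHS : starLetter (starLetter (starLetter S a) c) b
            = insert b ((insert c (insert a (S.erase r))).erase c) := by
          rw [hac]
          refine starLetter_bump _ b c (Finset.mem_insert_self _ _) (by omega) ?_
          intro x hx hbx
          rcases Finset.mem_insert.1 hx with hxc | hx'
          · omega
          · rcases Finset.mem_insert.1 hx' with hxa | hx''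
            · omega
            · obtain ⟨hxr, hxS⟩ := Finset.mem_erase.1 hx''
              have := hsmall x hxS hxr; omega
        rw [hLHS, hRHS]
        ext x
        simp only [Finset.mem_insert, Finset.mem_erase]
        by_cases hx : x ∈ S
        · have f1 : a ≤ x → c ≤ x := he x hx
          have f2 : c ≤ x → r ≤ x := hrmin x hx
          simp [hx] <;> omega
        · simp [hx] <;> omega
    · push_neg at hr
      have hlt : ∀ x ∈ S, x < a := by
        intro x hx
        have := hr x hx; have := he x hx; omega
      have hSc : starLetter S c = insert c S := starLetter_insert S c hr
      have hSa : starLetter S a = insert a S := starLetter_insert S a hlt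
      have hca : starLetter (starLetter S c) a
          = insert a ((insert c S).erase c) := by
        rw [hSc]
        refine starLetter_bump _ a c (Finset.mem_insert_self _ _) (by omega) ?_
        intro x hx hax
        rcases Finset.mem_insert.1 hx with hxc | hx'
        · omega
        · have := hlt x hx'; omega
      have hLHS : starLetter (starLetter (starLetter S c) a) b
          = insert b (insert a ((insert c S).erase c)) := by
        rw [hca]
        refine starLetter_insert _ b ?_
        intro x hx
        rcases Finset.mem_insert.1 hx with hxa | hx'
        · omega
        · obtain ⟨hxc, hxS'⟩ := Finset.mem_erase.1 hx'
          rcases Finset.mem_insert.1 hxS' with h' | h'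
          · omega
          · have := hlt x h'; omega
      have hac : starLetter (starLetter S a) c = insert c (insert a S) := by
        rw [hSa]
        refine starLetter_insert _ c ?_
        intro x hx
        rcases Finset.mem_insert.1 hx with hxa | hx'
        · omega
        · have := hlt x hx'; omega
      have hRHS : starLetter (starLetter (starLetter S a) c) b
          = insert b ((insert c (insert a S)).erase c) := by
        rw [hac]
        refine starLetter_bump _ b c (Finset.mem_insert_self _ _) (by omega) ?_
        intro x hx hbx
        rcases Finset.mem_insert.1 hx with hxc | hx'
        · omega
        · rcases Finset.mem_insert.1 hx' with hxa | hx''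
          · omega
          · have := hlt x hx''; omega
      rw [hLHS, hRHS]
      ext x
      simp only [Finset.mem_insert, Finset.mem_erase]
      by_cases hx : x ∈ S
      · have := hlt x hx
        simp [hx] <;> omega
      · simp [hx] <;> omega

/-- Knuth (plactic) equivalence of words: generated by
`u bac v ≡ u bca v` and `u acb v ≡ u cab v` for `a < b < c`, together with
`u bba v ≡ u bab v` and `u baa v ≡ u aba v` for `a < b`. -/
inductive Knuth : List ℕ → List ℕ → Prop
  | wl (u v : List ℕ) (a b c : ℕ) (h1 : a < b) (h2 : b < c) :
      Knuth (u ++ [b, a, c] ++ v) (u ++ [b, c, a] ++ v)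
  | wr (u v : List ℕ) (a b c : ℕ) (h1 : a < b) (h2 : b < c) :
      Knuth (u ++ [a, c, b] ++ v) (u ++ [c, a, b] ++ v)
  | eql (u v : List ℕ) (a b : ℕ) (h : a < b) :
      Knuth (u ++ [b, b, a] ++ v) (u ++ [b, a, b] ++ v)
  | eqr (u v : List ℕ) (a b : ℕ) (h : a < b) :
      Knuth (u ++ [b, a, a] ++ v) (u ++ [a, b, a] ++ v)
  | refl (u : List ℕ) : Knuth u u
  | symm {u v : List ℕ} : Knuth u v → Knuth v u
  | trans {u v w : List ℕ} : Knuth u v → Knuth v w → Knuth u w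

lemma star_append (S : Finset ℕ) (l1 l2 : List ℕ) :
    star S (l1 ++ l2) = star (star S l1) l2 :=
  List.foldl_append

lemma star_cons (S : Finset ℕ) (x : ℕ) (l : List ℕ) :
    star S (x :: l) = star (starLetter S x) l := rfl

lemma star_aux {u v : List ℕ} (h : Knuth u v) (S : Finset ℕ) :
    star S u.reverse = star S v.reverse := by
  induction h generalizing S with
  | wl u v a b c h1 h2 =>
    simp only [List.reverse_append, List.reverse_cons, List.reverse_nil, List.nil_append,
      List.cons_append, List.append_assoc]
    rw [star_append, star_append]
    simp only [star_cons]
    rw [t_wl _ h1 h2]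
  | wr u v a b c h1 h2 =>
    simp only [List.reverse_append, List.reverse_cons, List.reverse_nil, List.nil_append,
      List.cons_append, List.append_assoc]
    rw [star_append, star_append]
    simp only [star_cons]
    rw [t_wr _ h1 h2]
  | eql u v a b h =>
    simp only [List.reverse_append, List.reverse_cons, List.reverse_nil, List.nil_append,
      List.cons_append, List.append_assoc]
    rw [star_append, star_append]
    simp only [star_cons]
    rw [t_eql _ h]
  | eqr u v a b h =>
    simp only [List.reverse_append, List.reverse_cons, List.reverse_nil, List.nil_append,
      List.cons_append, List.append_assoc]
    rw [star_append, star_append]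
    simp only [star_cons]
    rw [t_eqr _ h]
  | refl u => rfl
  | symm _ ih => exact (ih S).symm
  | trans _ _ ih1 ih2 => exact (ih1 S).trans (ih2 S)

/-- If the reverses of two words `w` and `w'` are Knuth equivalent, then
`S ⋆ w = S ⋆ w'` for every finite `S`. -/
theorem stmt11 (w w' : List ℕ) (h : Knuth w.reverse w'.reverse) (S : Finset ℕ) :
    star S w = star S w' := by
  have := star_aux h S
  rwa [List.reverse_reverse, List.reverse_reverse] at this
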